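/- Under the stated setup, defining the survival function P⋆(l) = Σ_{q≥l} p(q) > 0, the coupled-sum estimator Σ_{l=0}^{L} Ψ_l / P⋆(l) is integrable and E[Σ_{l=0}^{L} Ψ_l / P⋆(l)] = a. That is, the coupled-sum randomized truncation yields an unbiased estimator of the limit a = lim_{l→∞} a_l. -/

import Mathlib

open MeasureTheory ProbabilityTheory Filter
open scoped ENNReal

/-- Unbiasedness of the coupled-sum debiased estimator `Σ_{l=0}^L Ψ_l / P⋆(l)`,
where `P⋆(l) = Σ_{q ≥ l} p(q)` is the survival function of the level
distribution: the estimator is integrable with expectation the limit `A`. -/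
theorem coupled_sum_estimator_unbiased
    {Ω : Type*} [MeasurableSpace Ω] (P : Measure Ω) [IsProbabilityMeasure P]
    (d : ℕ) (hd : 1 ≤ d)
    (Ψ : ℕ → Ω → EuclideanSpace ℝ (Fin d))
    (hmeas : ∀ l, Measurable (Ψ l))
    (hindep : iIndepFun Ψ P)
    (hL2 : ∀ l, MemLp (Ψ l) 2 P)
    (a : ℕ → EuclideanSpace ℝ (Fin d)) (A : EuclideanSpace ℝ (Fin d))
    (h0 : ∫ ω, Ψ 0 ω ∂P = a 0)
    (hinc : ∀ l, 1 ≤ l → ∫ ω, Ψ l ω ∂P = a l - a (l - 1))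
    (hconv : Tendsto a atTop (nhds A))
    (p : ℕ → ℝ) (hp : ∀ l, 0 < p l) (hpsum : ∑' l, p l = 1)
    (hsum : Summable fun l => ∫ ω, ‖Ψ l ω‖ ∂P)
    (L : Ω → ℕ) (hLmeas : Measurable L)
    (hLlaw : ∀ l, P {ω | L ω = l} = ENNReal.ofReal (p l))
    (hLindep : IndepFun L (fun ω l => Ψ l ω) P)
    (Pstar : ℕ → ℝ) (hPstar : ∀ l, Pstar l = ∑' q : ℕ, if l ≤ q then p q else 0) :
    (∀ l, 0 < Pstar l) ∧
      Integrable (fun ω => ∑ l ∈ Finset.range (L ω + 1), (Pstar l)⁻¹ • Ψ l ω) P ∧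
      ∫ ω, ∑ l ∈ Finset.range (L ω + 1), (Pstar l)⁻¹ • Ψ l ω ∂P = A := by
  classical
  -- summability of p
  have hsump : Summable p := by
    by_contra h
    rw [tsum_eq_zero_of_not_summable h] at hpsum
    exact one_ne_zero hpsum.symm
  have hif : ∀ l, Summable (fun q => if l ≤ q then p q else 0) := fun l =>
    Summable.of_nonneg_of_le (fun q => by by_cases h : l ≤ q <;> simp [h, (hp q).le])
      (fun q => by by_cases h : l ≤ q <;> simp [h, (hp q).le]) hsump
  have hPpos : ∀ l, 0 < Pstar l := by
    intro l
    rw [hPstar]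
    have h1 := (hif l).le_tsum l
      (fun j _ => by by_cases h : l ≤ j <;> simp [h, (hp j).le])
    simp only [le_refl, if_true] at h1
    exact lt_of_lt_of_le (hp l) h1
  -- measure of the survival events
  have hAmeas : ∀ l, MeasurableSet (L ⁻¹' Set.Ici l) := fun l => hLmeas measurableSet_Ici
  have hPA : ∀ l, P (L ⁻¹' Set.Ici l) = ENNReal.ofReal (Pstar l) := by
    intro l
    have hU : L ⁻¹' Set.Ici l = ⋃ q, L ⁻¹' ({q} ∩ Set.Ici l) := by
      ext ω
      simp only [Set.mem_preimage, Set.mem_iUnion, Set.mem_inter_iff, Set.mem_singleton_iff,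
        Set.mem_Ici]
      exact ⟨fun h => ⟨L ω, rfl, h⟩, by rintro ⟨q, rfl, h⟩; exact h⟩
    rw [hU, measure_iUnion ?_ (fun q => hLmeas ((measurableSet_singleton q).inter measurableSet_Ici))]
    · have hq : ∀ q, P (L ⁻¹' ({q} ∩ Set.Ici l)) = ENNReal.ofReal (if l ≤ q then p q else 0) := by
        intro q
        by_cases h : l ≤ q
        · rw [if_pos h, Set.inter_eq_left.mpr (by simpa [Set.singleton_subset_iff] using h)]
          exact hLlaw q
        · rw [if_neg h, ENNReal.ofReal_zero]
          have he : ({q} : Set ℕ) ∩ Set.Ici l = (∅ : Set ℕ) := by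
            ext x
            simp only [Set.mem_inter_iff, Set.mem_singleton_iff, Set.mem_Ici,
              Set.mem_empty_iff_false, iff_false, not_and]
            rintro rfl
            omega
          rw [he]
          simp
      calc ∑' q, P (L ⁻¹' ({q} ∩ Set.Ici l))
          = ∑' q, ENNReal.ofReal (if l ≤ q then p q else 0) := tsum_congr hq
        _ = ENNReal.ofReal (∑' q, if l ≤ q then p q else 0) :=
            (ENNReal.ofReal_tsum_of_nonneg
              (fun q => by by_cases h : l ≤ q <;> simp [h, (hp q).le]) (hif l)).symm
        _ = ENNReal.ofReal (Pstar l) := by rw [← hPstar]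
    · intro q r hqr
      refine Set.disjoint_left.mpr ?_
      intro ω hqmem hrmem
      simp only [Set.mem_preimage, Set.mem_inter_iff, Set.mem_singleton_iff] at hqmem hrmem
      exact hqr (hqmem.1 ▸ hrmem.1 ▸ rfl)
  -- basic integrability
  have hΨint : ∀ l, Integrable (Ψ l) P := fun l => (hL2 l).integrable one_le_two
  -- coordinate evaluation of vector integrals
  have coord : ∀ (f : Ω → EuclideanSpace ℝ (Fin d)), Integrable f P → ∀ i : Fin d,
      (∫ ω, f ω ∂P) i = ∫ ω, f ω i ∂P := by
    intro f hf i
    have h1 := (EuclideanSpace.proj (𝕜 := ℝ) i).integral_comp_comm hf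
    simpa using h1.symm
  -- independence machinery
  have hΨseq : Measurable (fun ω => fun k => Ψ k ω) := measurable_pi_lambda _ hmeas
  have key : ∀ (l : ℕ) (φ : (ℕ → EuclideanSpace ℝ (Fin d)) → ℝ), Measurable φ →
      ∫ ω, Set.indicator (Set.Ici l) (fun _ => (1:ℝ)) (L ω) * φ (fun k => Ψ k ω) ∂P
        = Pstar l * ∫ ω, φ (fun k => Ψ k ω) ∂P := by
    intro l φ hφ
    have hXm : Measurable (Set.indicator (Set.Ici l) (fun _ : ℕ => (1:ℝ))) :=
      measurable_const.indicator measurableSet_Ici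
    have hInd : IndepFun (fun ω => Set.indicator (Set.Ici l) (fun _ => (1:ℝ)) (L ω))
        (fun ω => φ (fun k => Ψ k ω)) P := hLindep.comp hXm hφ
    have h1 := hInd.integral_fun_mul_eq_mul_integral (hXm.comp hLmeas).aestronglyMeasurable
      (hφ.comp hΨseq).aestronglyMeasurable
    have hX : (fun ω => Set.indicator (Set.Ici l) (fun _ => (1:ℝ)) (L ω))
        = (L ⁻¹' Set.Ici l).indicator (fun _ => (1:ℝ)) := by
      funext ω
      by_cases h : l ≤ L ω <;>
        simp [Set.indicator_apply, Set.mem_Ici, Set.mem_preimage, h]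
    have hXint : ∫ ω, Set.indicator (Set.Ici l) (fun _ => (1:ℝ)) (L ω) ∂P = Pstar l := by
      rw [hX]
      rw [integral_indicator_const (1:ℝ) (hAmeas l), measureReal_def, hPA l, smul_eq_mul, mul_one,
        ENNReal.toReal_ofReal (hPpos l).le]
    calc ∫ ω, Set.indicator (Set.Ici l) (fun _ => (1:ℝ)) (L ω) * φ (fun k => Ψ k ω) ∂P
        = (∫ ω, Set.indicator (Set.Ici l) (fun _ => (1:ℝ)) (L ω) ∂P)
            * ∫ ω, φ (fun k => Ψ k ω) ∂P := h1
      _ = Pstar l * ∫ ω, φ (fun k => Ψ k ω) ∂P := by rw [hXint]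
  -- the summands
  set g : ℕ → Ω → EuclideanSpace ℝ (Fin d) :=
    fun l => (L ⁻¹' Set.Ici l).indicator (fun ω => (Pstar l)⁻¹ • Ψ l ω) with hg
  have hg_int : ∀ l, Integrable (g l) P := fun l =>
    (((hΨint l).smul ((Pstar l)⁻¹)).indicator (hAmeas l))
  have hg_norm : ∀ l, ∫ ω, ‖g l ω‖ ∂P = ∫ ω, ‖Ψ l ω‖ ∂P := by
    intro l
    have hφ : Measurable (fun s : ℕ → EuclideanSpace ℝ (Fin d) => ‖(Pstar l)⁻¹ • s l‖) :=
      ((measurable_pi_apply l).const_smul ((Pstar l)⁻¹)).norm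
    have hpt : ∀ ω, ‖g l ω‖
        = Set.indicator (Set.Ici l) (fun _ => (1:ℝ)) (L ω) * ‖(Pstar l)⁻¹ • Ψ l ω‖ := by
      intro ω
      by_cases h : l ≤ L ω <;>
        simp [hg, Set.indicator_apply, Set.mem_preimage, Set.mem_Ici, h]
    calc ∫ ω, ‖g l ω‖ ∂P
        = ∫ ω, Set.indicator (Set.Ici l) (fun _ => (1:ℝ)) (L ω)
            * ‖(Pstar l)⁻¹ • Ψ l ω‖ ∂P := by
          exact integral_congr_ae (Filter.Eventually.of_forall hpt)
      _ = Pstar l * ∫ ω, ‖(Pstar l)⁻¹ • Ψ l ω‖ ∂P := key l _ hφ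
      _ = ∫ ω, ‖Ψ l ω‖ ∂P := by
          simp_rw [norm_smul, Real.norm_eq_abs, abs_of_nonneg (inv_nonneg.mpr (hPpos l).le)]
          rw [integral_const_mul, ← mul_assoc, mul_inv_cancel₀ (hPpos l).ne', one_mul]
  have hg_integral : ∀ l, ∫ ω, g l ω ∂P = ∫ ω, Ψ l ω ∂P := by
    intro l
    refine PiLp.ext fun i => ?_
    rw [coord _ (hg_int l) i, coord _ (hΨint l) i]
    have hφ : Measurable (fun s : ℕ → EuclideanSpace ℝ (Fin d) => (Pstar l)⁻¹ * s l i) :=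
      (((EuclideanSpace.proj (𝕜 := ℝ) i).continuous.measurable).comp
        (measurable_pi_apply l)).const_mul _
    have hpt : ∀ ω, g l ω i
        = Set.indicator (Set.Ici l) (fun _ => (1:ℝ)) (L ω) * ((Pstar l)⁻¹ * Ψ l ω i) := by
      intro ω
      rcases le_or_gt l (L ω) with h | h
      · simp only [hg]
        rw [Set.indicator_of_mem (by simpa using h) (fun _ => (1:ℝ)),
          Set.indicator_of_mem (by simpa using h)]
        simp [PiLp.smul_apply, smul_eq_mul]
      · simp only [hg]
        rw [Set.indicator_of_notMem (by simpa using h.not_ge) (fun _ => (1:ℝ)),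
          Set.indicator_of_notMem (by simpa using h.not_ge)]
        simp
    calc ∫ ω, g l ω i ∂P
        = ∫ ω, Set.indicator (Set.Ici l) (fun _ => (1:ℝ)) (L ω)
            * ((Pstar l)⁻¹ * Ψ l ω i) ∂P :=
          integral_congr_ae (Filter.Eventually.of_forall hpt)
      _ = Pstar l * ∫ ω, (Pstar l)⁻¹ * Ψ l ω i ∂P := key l _ hφ
      _ = ∫ ω, Ψ l ω i ∂P := by
          rw [integral_const_mul, ← mul_assoc, mul_inv_cancel₀ (hPpos l).ne', one_mul]
  -- pointwise identity with a tsum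
  have hpt : ∀ ω, ∑ l ∈ Finset.range (L ω + 1), (Pstar l)⁻¹ • Ψ l ω = ∑' l, g l ω := by
    intro ω
    simp only [hg]
    have hz : ∀ l ∉ Finset.range (L ω + 1),
        (L ⁻¹' Set.Ici l).indicator (fun ω => (Pstar l)⁻¹ • Ψ l ω) ω = 0 := by
      intro l hl
      rw [Finset.mem_range] at hl
      exact Set.indicator_of_notMem
        (by simp only [Set.mem_preimage, Set.mem_Ici]; omega) _
    rw [tsum_eq_sum hz]
    refine Finset.sum_congr rfl fun l hl => ?_
    rw [Finset.mem_range] at hl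
    have hmem : ω ∈ L ⁻¹' Set.Ici l := by
      simp only [Set.mem_preimage, Set.mem_Ici]; omega
    rw [Set.indicator_of_mem hmem]
  -- measurability of the estimator
  have hFmeas : Measurable (fun ω => ∑ l ∈ Finset.range (L ω + 1), (Pstar l)⁻¹ • Ψ l ω) := by
    have h1 : Measurable (fun q : Ω × ℕ => ∑ l ∈ Finset.range (q.2 + 1), (Pstar l)⁻¹ • Ψ l q.1) :=
      measurable_from_prod_countable_left fun n => by
        dsimp only
        exact Finset.measurable_sum _ fun l _ => (hmeas l).const_smul (Pstar l)⁻¹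
    exact h1.comp (measurable_id.prodMk hLmeas)
  -- finiteness of the integral of the norm
  have hglint : ∀ l, ∫⁻ ω, ‖g l ω‖₊ ∂P = ENNReal.ofReal (∫ ω, ‖Ψ l ω‖ ∂P) := by
    intro l
    have h := ofReal_integral_norm_eq_lintegral_enorm (hg_int l)
    rw [hg_norm l] at h
    exact h.symm
  have hfin : Integrable (fun ω => ∑ l ∈ Finset.range (L ω + 1), (Pstar l)⁻¹ • Ψ l ω) P := by
    refine ⟨hFmeas.aestronglyMeasurable, ?_⟩
    have hbound : ∀ ω, (‖∑ l ∈ Finset.range (L ω + 1), (Pstar l)⁻¹ • Ψ l ω‖₊ : ℝ≥0∞)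
        ≤ ∑' l, (‖g l ω‖₊ : ℝ≥0∞) := by
      intro ω
      have hfs : ∑ l ∈ Finset.range (L ω + 1), (Pstar l)⁻¹ • Ψ l ω
          = ∑ l ∈ Finset.range (L ω + 1), g l ω := by
        refine Finset.sum_congr rfl fun l hl => ?_
        rw [Finset.mem_range] at hl
        have hmem : ω ∈ L ⁻¹' Set.Ici l := by
          simp only [Set.mem_preimage, Set.mem_Ici]; omega
        simp only [hg]
        rw [Set.indicator_of_mem hmem]
      rw [hfs]
      calc (‖∑ l ∈ Finset.range (L ω + 1), g l ω‖₊ : ℝ≥0∞)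
          ≤ ∑ l ∈ Finset.range (L ω + 1), (‖g l ω‖₊ : ℝ≥0∞) := by
            rw [← ENNReal.coe_finset_sum]
            exact_mod_cast nnnorm_sum_le _ _
        _ ≤ ∑' l, (‖g l ω‖₊ : ℝ≥0∞) := ENNReal.sum_le_tsum _
    calc ∫⁻ ω, ‖∑ l ∈ Finset.range (L ω + 1), (Pstar l)⁻¹ • Ψ l ω‖₊ ∂P
        ≤ ∫⁻ ω, ∑' l, (‖g l ω‖₊ : ℝ≥0∞) ∂P := lintegral_mono hbound
      _ = ∑' l, ∫⁻ ω, ‖g l ω‖₊ ∂P :=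
          lintegral_tsum fun l => (hg_int l).aestronglyMeasurable.enorm
      _ = ∑' l, ENNReal.ofReal (∫ ω, ‖Ψ l ω‖ ∂P) := tsum_congr hglint
      _ = ENNReal.ofReal (∑' l, ∫ ω, ‖Ψ l ω‖ ∂P) :=
          (ENNReal.ofReal_tsum_of_nonneg
            (fun l => integral_nonneg fun ω => norm_nonneg _) hsum).symm
      _ < ⊤ := ENNReal.ofReal_lt_top
  -- the telescoping limit
  have htel : ∀ n, ∑ l ∈ Finset.range (n + 1), ∫ ω, Ψ l ω ∂P = a n := by
    intro n
    induction n with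
    | zero => simpa using h0
    | succ n ih =>
      rw [Finset.sum_range_succ, ih, hinc (n + 1) (by omega)]
      simp
  have hS : Summable (fun l => ∫ ω, Ψ l ω ∂P) :=
    Summable.of_norm_bounded hsum fun l => norm_integral_le_integral_norm _
  have htsum : ∑' l, ∫ ω, Ψ l ω ∂P = A := by
    have h1 : Tendsto (fun n => ∑ l ∈ Finset.range (n + 1), ∫ ω, Ψ l ω ∂P) atTop
        (nhds (∑' l, ∫ ω, Ψ l ω ∂P)) :=
      (hS.hasSum.tendsto_sum_nat).comp (tendsto_add_atTop_nat 1)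
    simp_rw [htel] at h1
    exact tendsto_nhds_unique h1 hconv
  refine ⟨hPpos, hfin, ?_⟩
  calc ∫ ω, ∑ l ∈ Finset.range (L ω + 1), (Pstar l)⁻¹ • Ψ l ω ∂P
      = ∫ ω, ∑' l, g l ω ∂P := integral_congr_ae (Filter.Eventually.of_forall hpt)
    _ = ∑' l, ∫ ω, g l ω ∂P :=
        (integral_tsum_of_summable_integral_norm hg_int
          (by simpa only [funext hg_norm] using hsum)).symm
    _ = ∑' l, ∫ ω, Ψ l ω ∂P := tsum_congr hg_integral
    _ = A := htsum
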